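/- Let H be a spider graph whose center vertex has degree k, where 3 ≤ k ≤ 4. Then μ_int(K_1 ⊙ H) ≤ 2, where K_1 ⊙ H is the graph obtained from H by adding a single new universal vertex adjacent to every vertex of H. -/

import Mathlib

/-- An (improper) interval edge coloring: for every vertex, the set of colors on
incident edges forms an interval of consecutive integers. -/
def IsIntervalColoring {V : Type*} (G : SimpleGraph V) (c : Sym2 V → ℤ) : Prop :=
  ∀ v : V, ∀ a b x : ℤ,
    (∃ u, G.Adj v u ∧ c s(v, u) = a) → (∃ u, G.Adj v u ∧ c s(v, u) = b) →
    a ≤ x → x ≤ b → ∃ u, G.Adj v u ∧ c s(v, u) = x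

/-- A coloring is `k`-improper if at every vertex each color appears on at most
`k` incident edges. -/
def IsKImproper {V : Type*} (G : SimpleGraph V) (c : Sym2 V → ℤ) (k : ℕ) : Prop :=
  ∀ v : V, ∀ q : ℤ, ({u : V | G.Adj v u ∧ c s(v, u) = q}).ncard ≤ k

/-- The interval coloring impropriety `μ_int(G)`: the least `k` such that `G`
admits a `k`-improper interval edge coloring. -/
noncomputable def impropriety {V : Type*} (G : SimpleGraph V) : ℕ :=
  sInf {k : ℕ | ∃ c : Sym2 V → ℤ, IsIntervalColoring G c ∧ IsKImproper G c k}

/-- The maximum degree of a graph. -/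
noncomputable def maxDeg {V : Type*} (G : SimpleGraph V) : ℕ :=
  sSup {d : ℕ | ∃ v : V, (G.neighborSet v).ncard = d}

/-- The corona product `G ⊙ H`: take `G` and one copy of `H` for every vertex
of `G`, joining each vertex `v` of `G` to all vertices of its copy of `H`. -/
def corona {V W : Type*} (G : SimpleGraph V) (H : SimpleGraph W) :
    SimpleGraph (V ⊕ V × W) where
  Adj x y :=
    match x, y with
    | Sum.inl u, Sum.inl v => G.Adj u v
    | Sum.inl u, Sum.inr p => u = p.1
    | Sum.inr p, Sum.inl u => u = p.1
    | Sum.inr p, Sum.inr q => p.1 = q.1 ∧ H.Adj p.2 q.2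
  symm := by
    refine ⟨?_⟩
    rintro (u | p) (v | q) h
    · exact h.symm
    · exact h
    · exact h
    · exact ⟨h.1.symm, h.2.symm⟩
  loopless := by
    refine ⟨?_⟩
    rintro (u | p) h
    · exact G.loopless.irrefl u h
    · exact H.loopless.irrefl p.2 h.2

/-- `H` is a spider graph with center `c` of degree `k`: a tree in which `c` has
degree `k ≥ 3` and every other vertex has degree at most 2. -/
def IsSpider {W : Type*} (H : SimpleGraph W) (c : W) (k : ℕ) : Prop :=
  H.IsTree ∧ (H.neighborSet c).ncard = k ∧ 3 ≤ k ∧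
    ∀ w : W, w ≠ c → (H.neighborSet w).ncard ≤ 2

section AuxSpider
open SimpleGraph Walk

variable {W : Type*} {H : SimpleGraph W}

lemma auxSP {c y x : W} (p : H.Walk c y) (hx : x ∈ p.support) :
    H.dist c x + H.dist x y ≤ p.length := by
  obtain ⟨q, r, rfl⟩ := Walk.mem_support_iff_exists_append.1 hx
  rw [Walk.length_append]
  exact add_le_add (SimpleGraph.dist_le q) (SimpleGraph.dist_le r)

lemma auxStep (ht : H.IsTree) (c : W) {w w' : W} (h : H.Adj w w') :
    H.dist c w' = H.dist c w + 1 ∨ H.dist c w = H.dist c w' + 1 := by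
  have hconn := ht.isConnected
  have h1 : H.dist c w' ≤ H.dist c w + 1 := by
    calc H.dist c w' ≤ H.dist c w + H.dist w w' := hconn.dist_triangle
    _ ≤ H.dist c w + 1 := by
        have : H.dist w w' = 1 := SimpleGraph.dist_eq_one_iff_adj.2 h
        omega
  have h2 : H.dist c w ≤ H.dist c w' + 1 := by
    calc H.dist c w ≤ H.dist c w' + H.dist w' w := hconn.dist_triangle
    _ ≤ H.dist c w' + 1 := by
        have : H.dist w' w = 1 := SimpleGraph.dist_eq_one_iff_adj.2 h.symm
        omega
  by_cases heq : H.dist c w' = H.dist c w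
  · exfalso
    obtain ⟨p, hp⟩ := hconn.exists_walk_length_eq_dist c w
    have hpath : p.IsPath := p.isPath_of_length_eq_dist hp
    by_cases hmem : w' ∈ p.support
    · have := auxSP p hmem
      rw [hp, heq] at this
      have h0 : H.dist w' w = 0 := by omega
      have := (hconn.dist_eq_zero_iff).1 h0
      exact h.ne' this
    · have hq : (p.concat h).IsPath := by
        rw [Walk.isPath_def, Walk.support_concat]
        simp only [List.concat_eq_append, List.nodup_append]
        refine ⟨hpath.support_nodup, List.nodup_singleton _, ?_⟩
        intro a ha b hb hab
        simp only [List.mem_singleton] at hb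
        subst hb; subst hab; exact hmem ha
      obtain ⟨p', hp'⟩ := hconn.exists_walk_length_eq_dist c w'
      have hpath' : p'.IsPath := p'.isPath_of_length_eq_dist hp'
      obtain ⟨pp, -, hun⟩ := ht.existsUnique_path c w'
      have : (p.concat h).length = p'.length := by rw [hun _ hq, hun _ hpath']
      rw [Walk.length_concat, hp, hp', heq] at this
      omega
  · omega

lemma auxParentExists (ht : H.IsTree) (c : W) {w : W} (hw : w ≠ c) :
    ∃ x, H.Adj w x ∧ H.dist c x + 1 = H.dist c w := by
  have hconn := ht.isConnected
  have hd : H.dist c w ≠ 0 := by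
    intro h0
    exact hw ((hconn.dist_eq_zero_iff).1 h0).symm
  obtain ⟨p, hp⟩ := hconn.exists_walk_length_eq_dist c w
  have hrev : p.reverse.length = H.dist c w := by
    rw [Walk.length_reverse, hp]
  cases hq : p.reverse with
  | nil => rw [hq] at hrev; simp at hrev; exact absurd SimpleGraph.dist_self hd
  | cons hadj q =>
    rename_i x
    refine ⟨x, hadj, ?_⟩
    have hlen : q.length + 1 = H.dist c w := by
      rw [hq] at hrev; simpa using hrev
    have hle : H.dist c x ≤ q.length := by
      have := SimpleGraph.dist_le q.reverse
      rwa [Walk.length_reverse] at this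
    have hge : H.dist c w ≤ H.dist c x + 1 := by
      calc H.dist c w ≤ H.dist c x + H.dist x w := hconn.dist_triangle
      _ ≤ H.dist c x + 1 := by
          have : H.dist x w = 1 := SimpleGraph.dist_eq_one_iff_adj.2 hadj.symm
          omega
    omega

lemma auxParentUnique (ht : H.IsTree) (c : W) {w w₁ w₂ : W}
    (h1 : H.Adj w w₁) (h2 : H.Adj w w₂)
    (hd1 : H.dist c w₁ + 1 = H.dist c w) (hd2 : H.dist c w₂ + 1 = H.dist c w) :
    w₁ = w₂ := by
  have hconn := ht.isConnected
  obtain ⟨p₁, hp₁⟩ := hconn.exists_walk_length_eq_dist c w₁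
  obtain ⟨p₂, hp₂⟩ := hconn.exists_walk_length_eq_dist c w₂
  have hmem1 : w ∉ p₁.support := by
    intro hmem
    have := auxSP p₁ hmem
    rw [hp₁] at this
    have : H.dist c w + H.dist w w₁ ≤ H.dist c w₁ := this
    have hd : H.dist w w₁ = 1 := SimpleGraph.dist_eq_one_iff_adj.2 h1
    omega
  have hmem2 : w ∉ p₂.support := by
    intro hmem
    have := auxSP p₂ hmem
    rw [hp₂] at this
    have hd : H.dist w w₂ = 1 := SimpleGraph.dist_eq_one_iff_adj.2 h2
    omega
  have hq1 : (p₁.concat h1.symm).IsPath := by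
    rw [Walk.isPath_def, Walk.support_concat]
    simp only [List.concat_eq_append, List.nodup_append]
    exact ⟨(p₁.isPath_of_length_eq_dist hp₁).support_nodup, List.nodup_singleton _,
      fun a ha b hb hab => by simp only [List.mem_singleton] at hb; subst hb; subst hab; exact hmem1 ha⟩
  have hq2 : (p₂.concat h2.symm).IsPath := by
    rw [Walk.isPath_def, Walk.support_concat]
    simp only [List.concat_eq_append, List.nodup_append]
    exact ⟨(p₂.isPath_of_length_eq_dist hp₂).support_nodup, List.nodup_singleton _,
      fun a ha b hb hab => by simp only [List.mem_singleton] at hb; subst hb; subst hab; exact hmem2 ha⟩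
  obtain ⟨pp, -, hun⟩ := ht.existsUnique_path c w
  have e : (p₁.concat h1.symm) = (p₂.concat h2.symm) := by rw [hun _ hq1, hun _ hq2]
  have hw1 : w₁ ∈ (p₁.concat h1.symm).support := by
    rw [Walk.support_concat]
    simp [Walk.end_mem_support]
  rw [e, Walk.support_concat] at hw1
  simp only [List.concat_eq_append, List.mem_append, List.mem_singleton] at hw1
  rcases hw1 with hw1 | hw1
  · have := auxSP p₂ hw1
    rw [hp₂] at this
    have h0 : H.dist w₁ w₂ = 0 := by omega
    exact (hconn.dist_eq_zero_iff).1 h0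
  · exact absurd hw1 h1.ne'

lemma auxCardLeTwo {α : Type*} {S : Set α} (hfin : S.Finite)
    (h : ∀ x ∈ S, ∀ y ∈ S, ∀ z ∈ S, x = y ∨ x = z ∨ y = z) : S.ncard ≤ 2 := by
  by_contra hc
  push_neg at hc
  obtain ⟨x, hx, y, hy, z, hz, hxy, hxz, hyz⟩ := (Set.two_lt_ncard hfin).1 hc
  rcases h x hx y hy z hz with h' | h' | h' <;> tauto

end AuxSpider


/-- If `H` is a spider graph whose center has degree `k` with `3 ≤ k ≤ 4`, then
`μ_int(K_1 ⊙ H) ≤ 2`. -/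
theorem stmt11 {W : Type*} [Fintype W] (H : SimpleGraph W) (c : W) (k : ℕ)
    (hH : IsSpider H c k) (hk3 : 3 ≤ k) (hk4 : k ≤ 4) :
    impropriety (corona (⊥ : SimpleGraph (Fin 1)) H) ≤ 2 := by
  classical
  obtain ⟨htree, hdeg, -, hsp⟩ := hH
  have hconn := htree.isConnected
  have hdst0 : ∀ w : W, H.dist c w = 0 ↔ w = c := by
    intro w
    rw [hconn.dist_eq_zero_iff]
    exact eq_comm
  have hdpos : ∀ w : W, w ≠ c → 1 ≤ H.dist c w := by
    intro w hw
    have := (hdst0 w).not.2 hw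
    omega
  -- the parent function
  set parent : W → W := fun w =>
    if h : ∃ x, H.Adj w x ∧ H.dist c x + 1 = H.dist c w then h.choose else w with hparentdef
  have hP : ∀ w : W, w ≠ c →
      H.Adj w (parent w) ∧ H.dist c (parent w) + 1 = H.dist c w := by
    intro w hw
    have hex := auxParentExists htree c hw
    have : parent w = hex.choose := by
      rw [hparentdef]
      exact dif_pos hex
    rw [this]
    exact hex.choose_spec
  -- the neighbors of the center
  have hNfin : (H.neighborSet c).Finite := Set.toFinite _
  set Nc : Finset W := hNfin.toFinset with hNcdef
  have hNcmem : ∀ w : W, w ∈ Nc ↔ H.Adj c w := by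
    intro w
    rw [hNcdef, Set.Finite.mem_toFinset, SimpleGraph.mem_neighborSet]
  have hNcard : Nc.card = k := by
    rw [hNcdef, ← Set.ncard_eq_toFinset_card _ hNfin]
    exact hdeg
  set e : ↥Nc ≃ Fin k := Finset.equivFinOfCardEq hNcard with hedef
  set idx : W → ℕ := fun w => if h : w ∈ Nc then (e ⟨w, h⟩ : Fin k).val else 0 with hidxdef
  set nb : ℕ → W := fun i => if h : i < k then ((e.symm ⟨i, h⟩ : ↥Nc) : W) else c with hnbdef
  have hidx_lt : ∀ w ∈ Nc, idx w < k := by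
    intro w h
    rw [hidxdef]
    simp only [dif_pos h]
    exact (e ⟨w, h⟩).isLt
  have hidx_inj : ∀ w ∈ Nc, ∀ w' ∈ Nc, idx w = idx w' → w = w' := by
    intro w h w' h' heq
    rw [hidxdef] at heq
    simp only [dif_pos h, dif_pos h'] at heq
    have : e ⟨w, h⟩ = e ⟨w', h'⟩ := Fin.ext heq
    have := e.injective this
    exact Subtype.ext_iff.1 this
  have hnb_mem : ∀ i, i < k → nb i ∈ Nc ∧ idx (nb i) = i := by
    intro i hi
    have hmem : ((e.symm ⟨i, hi⟩ : ↥Nc) : W) ∈ Nc := (e.symm ⟨i, hi⟩).2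
    have hnbi : nb i = ((e.symm ⟨i, hi⟩ : ↥Nc) : W) := by
      rw [hnbdef]; exact dif_pos hi
    refine ⟨by rw [hnbi]; exact hmem, ?_⟩
    rw [hnbi, hidxdef]
    simp only [dif_pos hmem]
    have : (⟨((e.symm ⟨i, hi⟩ : ↥Nc) : W), hmem⟩ : ↥Nc) = e.symm ⟨i, hi⟩ := by
      exact Subtype.ext rfl
    rw [this, Equiv.apply_symm_apply]
  have hNc_dist : ∀ w ∈ Nc, H.dist c w = 1 := by
    intro w h
    exact SimpleGraph.dist_eq_one_iff_adj.2 ((hNcmem w).1 h)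
  -- the leg function
  set leg : W → W := fun w => parent^[H.dist c w - 1] w with hlegdef
  have hlegSelf : ∀ w : W, H.dist c w = 1 → leg w = w := by
    intro w h
    rw [hlegdef]
    simp [h]
  have hlegP : ∀ w : W, w ≠ c → 2 ≤ H.dist c w → leg w = leg (parent w) := by
    intro w hw h2
    obtain ⟨hadj, hdp⟩ := hP w hw
    rw [hlegdef]
    simp only
    rw [show H.dist c w - 1 = (H.dist c w - 2) + 1 by omega,
      Function.iterate_succ_apply, show H.dist c (parent w) - 1 = H.dist c w - 2 by omega]
  have hlegNc : ∀ w : W, w ≠ c → leg w ∈ Nc ∧ H.dist c (leg w) = 1 := by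
    intro w hw
    have key : ∀ n : ℕ, ∀ w : W, w ≠ c → H.dist c w = n →
        leg w ∈ Nc ∧ H.dist c (leg w) = 1 := by
      intro n
      induction n using Nat.strong_induction_on with
      | _ n ih =>
        intro w hw hn
        have h1 : 1 ≤ H.dist c w := hdpos w hw
        by_cases h2 : H.dist c w = 1
        · rw [hlegSelf w h2]
          exact ⟨(hNcmem w).2 (SimpleGraph.dist_eq_one_iff_adj.1 h2), h2⟩
        · obtain ⟨hadj, hdp⟩ := hP w hw
          have hpc : parent w ≠ c := by
            intro h
            rw [h] at hdp
            simp [SimpleGraph.dist_self] at hdp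
            omega
          have := ih (n - 1) (by omega) (parent w) hpc (by omega)
          rw [hlegP w hw (by omega)]
          exact this
    exact key (H.dist c w) w hw rfl
  -- uniqueness of children
  have hNfinw : ∀ w : W, (H.neighborSet w).Finite := fun w => Set.toFinite _
  have hChildU : ∀ p : W, p ≠ c → ∀ w w' : W, H.Adj p w → H.Adj p w' →
      H.dist c w = H.dist c p + 1 → H.dist c w' = H.dist c p + 1 → w = w' := by
    intro p hp w w' haw haw' hdw hdw'
    by_contra hne
    obtain ⟨hadjP, hdP⟩ := hP p hp
    have hPw : parent p ≠ w := by
      intro h; rw [h] at hdP; omega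
    have hPw' : parent p ≠ w' := by
      intro h; rw [h] at hdP; omega
    have hsub : ({w, w', parent p} : Set W) ⊆ H.neighborSet p := by
      intro x hx
      simp only [Set.mem_insert_iff, Set.mem_singleton_iff] at hx
      rcases hx with rfl | rfl | rfl
      · exact haw
      · exact haw'
      · exact hadjP
    have hnm : w ∉ ({w', parent p} : Set W) := by
      simp only [Set.mem_insert_iff, Set.mem_singleton_iff]
      push_neg
      exact ⟨hne, fun h => hPw h.symm⟩
    have h3 : ({w, w', parent p} : Set W).ncard = 3 := by
      rw [Set.ncard_insert_of_notMem hnm, Set.ncard_pair (fun h => hPw' h.symm)]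
    have := Set.ncard_le_ncard hsub (hNfinw p)
    rw [h3] at this
    have := hsp p hp
    omega
  -- the parent of a vertex is its unique neighbor closer to c
  have hParentU : ∀ w : W, w ≠ c → ∀ x : W, H.Adj w x →
      H.dist c x + 1 = H.dist c w → x = parent w := by
    intro w hw x hx hdx
    obtain ⟨hadj, hdp⟩ := hP w hw
    exact auxParentUnique htree c hx hadj hdx hdp
  -- children are on the same leg
  have hChildLeg : ∀ w ch : W, w ≠ c → H.Adj w ch →
      H.dist c ch = H.dist c w + 1 → leg ch = leg w := by
    intro w ch hw hadj hd
    have h1 : 1 ≤ H.dist c w := hdpos w hw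
    have hch : ch ≠ c := by
      intro h; subst h
      rw [SimpleGraph.dist_self] at hd
      omega
    have : w = parent ch := hParentU ch hch w hadj.symm (by omega)
    rw [hlegP ch hch (by omega), ← this]
  -- injectivity of (leg, dist)
  have hInj : ∀ w w' : W, w ≠ c → w' ≠ c → leg w = leg w' →
      H.dist c w = H.dist c w' → w = w' := by
    have key : ∀ n : ℕ, ∀ w w' : W, w ≠ c → w' ≠ c → leg w = leg w' →
        H.dist c w = n → H.dist c w' = n → w = w' := by
      intro n
      induction n using Nat.strong_induction_on with
      | _ n ih =>
        intro w w' hw hw' hleg hn hn'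
        have h1 : 1 ≤ H.dist c w := hdpos w hw
        by_cases h2 : H.dist c w = 1
        · rw [← hlegSelf w h2, ← hlegSelf w' (by omega), hleg]
        · obtain ⟨hadj, hdp⟩ := hP w hw
          obtain ⟨hadj', hdp'⟩ := hP w' hw'
          have hpc : parent w ≠ c := by
            intro h; rw [h] at hdp
            rw [SimpleGraph.dist_self] at hdp; omega
          have hpc' : parent w' ≠ c := by
            intro h; rw [h] at hdp'
            rw [SimpleGraph.dist_self] at hdp'; omega
          have hpeq : parent w = parent w' := by
            apply ih (n - 1) (by omega) _ _ hpc hpc' _ (by omega) (by omega)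
            rw [← hlegP w hw (by omega), ← hlegP w' hw' (by omega), hleg]
          exact hChildU (parent w) hpc w w' hadj.symm (by rw [hpeq]; exact hadj'.symm)
            (by omega) (by omega)
    intro w w' hw hw' hleg hd
    exact key (H.dist c w) w w' hw hw' hleg rfl hd.symm
  -- existence of ancestors at every level on the same leg
  have hAnc : ∀ w : W, w ≠ c → ∀ j : ℕ, 1 ≤ j → j ≤ H.dist c w →
      ∃ w' : W, w' ≠ c ∧ leg w' = leg w ∧ H.dist c w' = j := by
    have key : ∀ n : ℕ, ∀ w : W, w ≠ c → H.dist c w = n → ∀ j : ℕ, 1 ≤ j → j ≤ n →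
        ∃ w' : W, w' ≠ c ∧ leg w' = leg w ∧ H.dist c w' = j := by
      intro n
      induction n using Nat.strong_induction_on with
      | _ n ih =>
        intro w hw hn j hj1 hjn
        by_cases hje : j = n
        · exact ⟨w, hw, rfl, by omega⟩
        · obtain ⟨hadj, hdp⟩ := hP w hw
          have h2 : 2 ≤ H.dist c w := by
            have := hdpos w hw; omega
          have hpc : parent w ≠ c := by
            intro h; rw [h] at hdp
            rw [SimpleGraph.dist_self] at hdp; omega
          obtain ⟨w', hw', hleg', hd'⟩ := ih (n - 1) (by omega) (parent w) hpc (by omega)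
            j hj1 (by omega)
          exact ⟨w', hw', by rw [hleg', ← hlegP w hw h2], hd'⟩
    intro w hw j hj1 hjw
    exact key (H.dist c w) w hw rfl j hj1 hjw
  -- the coloring parameters
  set S : ℕ → ℤ := fun i => if i = 0 then 2 else if i = 3 then 0 else 1 with hSdef
  set D : ℕ → ℤ := fun i => if i ≤ 1 then 1 else -1 with hDdef
  set E : ℕ → ℤ := fun i => if i ≤ 1 then 0 else 1 with hEdef
  -- the colors
  set fw : W → ℤ := fun w => if w = c then 0 else
    S (idx (leg w)) + D (idx (leg w)) * ((H.dist c w : ℤ) - 1 + E (idx (leg w))) with hfwdef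
  set colE : W → ℤ := fun w =>
    S (idx (leg w)) + D (idx (leg w)) * ((H.dist c w : ℤ) - 1) with hcolEdef
  set F : (Fin 1 ⊕ Fin 1 × W) → (Fin 1 ⊕ Fin 1 × W) → ℤ := fun x y =>
    match x, y with
    | Sum.inl _, Sum.inl _ => 0
    | Sum.inl _, Sum.inr p => fw p.2
    | Sum.inr p, Sum.inl _ => fw p.2
    | Sum.inr p, Sum.inr q =>
        if H.dist c p.2 < H.dist c q.2 then colE q.2
        else if H.dist c q.2 < H.dist c p.2 then colE p.2 else 0
    with hFdef
  have hFsymm : ∀ x y, F x y = F y x := by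
    intro x y
    rcases x with a | p <;> rcases y with b | q <;> rw [hFdef]
    simp only
    rcases lt_trichotomy (H.dist c p.2) (H.dist c q.2) with h | h | h
    · rw [if_pos h, if_neg (by omega), if_pos h]
    · rw [if_neg (by omega), if_neg (by omega), if_neg (by omega), if_neg (by omega)]
    · rw [if_neg (by omega), if_pos h, if_pos h]
  set col : Sym2 (Fin 1 ⊕ Fin 1 × W) → ℤ := Sym2.lift ⟨F, hFsymm⟩ with hcoldef
  have hcol : ∀ x y, col s(x, y) = F x y := by
    intro x y
    rw [hcoldef, Sym2.lift_mk]
  -- basic color computations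
  have hcol_ul : ∀ (a : Fin 1) (p : Fin 1 × W), col s(Sum.inl a, Sum.inr p) = fw p.2 := by
    intro a p
    rw [hcol]
  have hcol_lu : ∀ (p : Fin 1 × W) (a : Fin 1), col s(Sum.inr p, Sum.inl a) = fw p.2 := by
    intro p a
    rw [hcol]
  have hcol_rr : ∀ (p q : Fin 1 × W), H.dist c p.2 < H.dist c q.2 →
      col s(Sum.inr p, Sum.inr q) = colE q.2 := by
    intro p q h
    rw [hcol, hFdef]
    simp only [if_pos h]
  have hcol_rr' : ∀ (p q : Fin 1 × W), H.dist c q.2 < H.dist c p.2 →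
      col s(Sum.inr p, Sum.inr q) = colE p.2 := by
    intro p q h
    rw [hcol, hFdef]
    simp only [if_neg (by omega : ¬ H.dist c p.2 < H.dist c q.2), if_pos h]
  -- arithmetic facts about the parameters
  have hD1 : ∀ i : ℕ, D i = 1 ∨ D i = -1 := by
    intro i
    rw [hDdef]
    by_cases h : i ≤ 1 <;> simp [h]
  have hfwc : fw c = 0 := by rw [hfwdef]; simp
  -- classification of f-values
  have hfwI : ∀ w : W, w ≠ c →
      (idx (leg w) = 0 ∧ fw w = (H.dist c w : ℤ) + 1) ∨
      (idx (leg w) = 1 ∧ fw w = (H.dist c w : ℤ)) ∨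
      (idx (leg w) = 2 ∧ fw w = 1 - (H.dist c w : ℤ)) ∨
      (idx (leg w) = 3 ∧ fw w = -(H.dist c w : ℤ)) := by
    intro w hw
    have hlt : idx (leg w) < k := hidx_lt _ (hlegNc w hw).1
    have hlt4 : idx (leg w) < 4 := by omega
    have hfweq : fw w = S (idx (leg w)) + D (idx (leg w)) * ((H.dist c w : ℤ) - 1 + E (idx (leg w))) := by
      rw [hfwdef]
      simp only [if_neg hw]
    interval_cases hi : idx (leg w) <;>
      simp only [hfweq, hSdef, hDdef, hEdef] <;> norm_num <;> ring_nf <;> omega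
  -- classification of edge colors (of the deeper endpoint)
  have hcolEI : ∀ w : W, w ≠ c →
      (idx (leg w) = 0 ∧ colE w = (H.dist c w : ℤ) + 1) ∨
      (idx (leg w) = 1 ∧ colE w = (H.dist c w : ℤ)) ∨
      (idx (leg w) = 2 ∧ colE w = 2 - (H.dist c w : ℤ)) ∨
      (idx (leg w) = 3 ∧ colE w = 1 - (H.dist c w : ℤ)) := by
    intro w hw
    have hlt : idx (leg w) < k := hidx_lt _ (hlegNc w hw).1
    have hlt4 : idx (leg w) < 4 := by omega
    interval_cases hi : idx (leg w) <;>
      simp only [hcolEdef, hi, hSdef, hDdef, hEdef] <;> norm_num <;> ring_nf <;> omega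
  -- adjacency in the corona
  set G' : SimpleGraph (Fin 1 ⊕ Fin 1 × W) := corona (⊥ : SimpleGraph (Fin 1)) H with hG'def
  have hadj_ll : ∀ a b : Fin 1, ¬ G'.Adj (Sum.inl a) (Sum.inl b) := by
    intro a b h
    rw [hG'def] at h
    simp [corona] at h
  have hadj_lr : ∀ (a : Fin 1) (p : Fin 1 × W), G'.Adj (Sum.inl a) (Sum.inr p) := by
    intro a p
    show a = p.1
    exact Subsingleton.elim _ _
  have hadj_rl : ∀ (p : Fin 1 × W) (a : Fin 1), G'.Adj (Sum.inr p) (Sum.inl a) := by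
    intro p a
    show a = p.1
    exact Subsingleton.elim _ _
  have hadj_rr : ∀ p q : Fin 1 × W, G'.Adj (Sum.inr p) (Sum.inr q) ↔ H.Adj p.2 q.2 := by
    intro p q
    constructor
    · intro h
      have h' : p.1 = q.1 ∧ H.Adj p.2 q.2 := h
      exact h'.2
    · intro h
      exact ⟨Subsingleton.elim _ _, h⟩
  have hprodext : ∀ p q : Fin 1 × W, p.2 = q.2 → (Sum.inr p : Fin 1 ⊕ Fin 1 × W) = Sum.inr q := by
    intro p q h
    have : p = q := Prod.ext (Subsingleton.elim _ _) h
    rw [this]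
  have hinlext : ∀ a b : Fin 1, (Sum.inl a : Fin 1 ⊕ Fin 1 × W) = Sum.inl b := by
    intro a b
    rw [Subsingleton.elim a b]
  -- injectivity of fw on a fixed leg
  have hfwInj : ∀ w w' : W, w ≠ c → w' ≠ c → fw w = fw w' →
      idx (leg w) = idx (leg w') → w = w' := by
    intro w w' hw hw' hf hidx
    have h1 := hfwI w hw
    have h2 := hfwI w' hw'
    have hdd : H.dist c w = H.dist c w' := by
      rcases h1 with ⟨e1, f1⟩ | ⟨e1, f1⟩ | ⟨e1, f1⟩ | ⟨e1, f1⟩ <;>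
        rcases h2 with ⟨e2, f2⟩ | ⟨e2, f2⟩ | ⟨e2, f2⟩ | ⟨e2, f2⟩ <;>
          rw [e1, e2] at hidx <;> omega
    exact hInj w w' hw hw' (hidx_inj _ (hlegNc w hw).1 _ (hlegNc w' hw').1 hidx) hdd
  have hSval : ∀ i : ℕ, i < 4 →
      (i = 0 ∧ S i = 2) ∨ (i = 1 ∧ S i = 1) ∨ (i = 2 ∧ S i = 1) ∨ (i = 3 ∧ S i = 0) := by
    intro i hi
    interval_cases i <;> simp [hSdef]
  have hcolE1 : ∀ n : W, n ∈ Nc → colE n = S (idx n) := by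
    intro n hn
    rw [hcolEdef]
    simp only
    rw [hlegSelf n (hNc_dist n hn), hNc_dist n hn]
    push_cast
    ring
  have hnbne : ∀ i, i < k → nb i ≠ c := by
    intro i hi h
    have := (hNcmem (nb i)).1 (hnb_mem i hi).1
    rw [h] at this
    exact H.loopless.irrefl c this
  -- the color of a child edge
  have hchildcol : ∀ w ch : W, w ≠ c → H.Adj w ch → H.dist c ch = H.dist c w + 1 →
      ch ≠ c ∧ colE ch = colE w + D (idx (leg w)) := by
    intro w ch hw hadj hd
    have h1 : 1 ≤ H.dist c w := hdpos w hw
    have hch : ch ≠ c := by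
      intro h; subst h
      rw [SimpleGraph.dist_self] at hd
      omega
    have hlegeq : leg ch = leg w := hChildLeg w ch hw hadj hd
    refine ⟨hch, ?_⟩
    rw [hcolEdef]
    simp only
    rw [hlegeq, hd]
    push_cast
    ring
  -- the coloring is 2-improper
  have hImp : IsKImproper G' col 2 := by
    intro v q
    apply auxCardLeTwo (Set.toFinite _)
    intro x hx y hy z hz
    simp only [Set.mem_setOf_eq] at hx hy hz
    rcases v with a | p
    · -- the universal vertex
      have hform : ∀ u : Fin 1 ⊕ Fin 1 × W, G'.Adj (Sum.inl a) u ∧ col s(Sum.inl a, u) = q →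
          ∃ pu : Fin 1 × W, u = Sum.inr pu ∧ fw pu.2 = q := by
        intro u hu
        rcases u with b | pu
        · exact absurd hu.1 (hadj_ll a b)
        · refine ⟨pu, rfl, ?_⟩
          rw [← hu.2, hcol_ul]
      obtain ⟨px, rfl, hfx⟩ := hform x hx
      obtain ⟨py, rfl, hfy⟩ := hform y hy
      obtain ⟨pz, rfl, hfz⟩ := hform z hz
      have key3 : px.2 = py.2 ∨ px.2 = pz.2 ∨ py.2 = pz.2 := by
        set w1 := px.2
        set w2 := py.2
        set w3 := pz.2
        by_contra hcon
        push_neg at hcon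
        obtain ⟨h12, h13, h23⟩ := hcon
        have hido : ∀ u v : W, u ≠ c → v ≠ c → u ≠ v → fw u = q → fw v = q →
            idx (leg u) ≠ idx (leg v) := by
          intro u v hu hv huv hfu hfv hid
          exact huv (hfwInj u v hu hv (by rw [hfu, hfv]) hid)
        by_cases h1c : w1 = c
        · have h2c : w2 ≠ c := fun h => h12 (by rw [h1c, h])
          have h3c : w3 ≠ c := fun h => h13 (by rw [h1c, h])
          have hq0 : q = 0 := by rw [← hfx, h1c]; exact hfwc
          have hd2 := hdpos w2 h2c
          have hd3 := hdpos w3 h3c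
          have hne23 := hido w2 w3 h2c h3c h23 hfy hfz
          rcases hfwI w2 h2c with ⟨e2, f2⟩ | ⟨e2, f2⟩ | ⟨e2, f2⟩ | ⟨e2, f2⟩ <;>
            rcases hfwI w3 h3c with ⟨e3, f3⟩ | ⟨e3, f3⟩ | ⟨e3, f3⟩ | ⟨e3, f3⟩ <;>
              rw [e2, e3] at hne23 <;> omega
        · by_cases h2c : w2 = c
          · have h3c : w3 ≠ c := fun h => h23 (by rw [h2c, h])
            have hq0 : q = 0 := by rw [← hfy, h2c]; exact hfwc
            have hd1 := hdpos w1 h1c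
            have hd3 := hdpos w3 h3c
            have hne13 := hido w1 w3 h1c h3c h13 hfx hfz
            rcases hfwI w1 h1c with ⟨e1, f1⟩ | ⟨e1, f1⟩ | ⟨e1, f1⟩ | ⟨e1, f1⟩ <;>
              rcases hfwI w3 h3c with ⟨e3, f3⟩ | ⟨e3, f3⟩ | ⟨e3, f3⟩ | ⟨e3, f3⟩ <;>
                rw [e1, e3] at hne13 <;> omega
          · by_cases h3c : w3 = c
            · have hq0 : q = 0 := by rw [← hfz, h3c]; exact hfwc
              have hd1 := hdpos w1 h1c
              have hd2 := hdpos w2 h2c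
              have hne12 := hido w1 w2 h1c h2c h12 hfx hfy
              rcases hfwI w1 h1c with ⟨e1, f1⟩ | ⟨e1, f1⟩ | ⟨e1, f1⟩ | ⟨e1, f1⟩ <;>
                rcases hfwI w2 h2c with ⟨e2, f2⟩ | ⟨e2, f2⟩ | ⟨e2, f2⟩ | ⟨e2, f2⟩ <;>
                  rw [e1, e2] at hne12 <;> omega
            · have hd1 := hdpos w1 h1c
              have hd2 := hdpos w2 h2c
              have hd3 := hdpos w3 h3c
              have hne12 := hido w1 w2 h1c h2c h12 hfx hfy
              have hne13 := hido w1 w3 h1c h3c h13 hfx hfz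
              have hne23 := hido w2 w3 h2c h3c h23 hfy hfz
              rcases hfwI w1 h1c with ⟨e1, f1⟩ | ⟨e1, f1⟩ | ⟨e1, f1⟩ | ⟨e1, f1⟩ <;>
                rcases hfwI w2 h2c with ⟨e2, f2⟩ | ⟨e2, f2⟩ | ⟨e2, f2⟩ | ⟨e2, f2⟩ <;>
                  rcases hfwI w3 h3c with ⟨e3, f3⟩ | ⟨e3, f3⟩ | ⟨e3, f3⟩ | ⟨e3, f3⟩ <;>
                    rw [e1, e2] at hne12 <;> rw [e1, e3] at hne13 <;>
                      rw [e2, e3] at hne23 <;> omega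
      rcases key3 with h | h | h
      · exact Or.inl (hprodext _ _ h)
      · exact Or.inr (Or.inl (hprodext _ _ h))
      · exact Or.inr (Or.inr (hprodext _ _ h))
    · by_cases hpc : p.2 = c
      · -- the center vertex
        have hform : ∀ u : Fin 1 ⊕ Fin 1 × W, G'.Adj (Sum.inr p) u ∧ col s(Sum.inr p, u) = q →
            (∃ b : Fin 1, u = Sum.inl b ∧ q = 0) ∨
            (∃ pu : Fin 1 × W, u = Sum.inr pu ∧ pu.2 ∈ Nc ∧ S (idx pu.2) = q) := by
          intro u hu
          rcases u with b | pu
          · refine Or.inl ⟨b, rfl, ?_⟩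
            rw [← hu.2, hcol_lu, hpc, hfwc]
          · have hadj : H.Adj c pu.2 := by
              rw [← hpc]
              exact (hadj_rr p pu).1 hu.1
            have hmem : pu.2 ∈ Nc := (hNcmem pu.2).2 hadj
            refine Or.inr ⟨pu, rfl, hmem, ?_⟩
            rw [← hcolE1 pu.2 hmem, ← hu.2]
            rw [hcol_rr p pu]
            rw [hpc, SimpleGraph.dist_self, hNc_dist pu.2 hmem]
            omega
        have hii : ∀ p1 p2 : Fin 1 × W, p1.2 ∈ Nc → p2.2 ∈ Nc → S (idx p1.2) = q →
            S (idx p2.2) = q → q = 0 →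
            (Sum.inr p1 : Fin 1 ⊕ Fin 1 × W) = Sum.inr p2 := by
          intro p1 p2 h1 h2 hs1 hs2 hq0
          by_cases he : idx p1.2 = idx p2.2
          · exact hprodext _ _ (hidx_inj _ h1 _ h2 he)
          · exfalso
            rcases hSval (idx p1.2) (by have := hidx_lt _ h1; omega) with
                ⟨e1, f1⟩ | ⟨e1, f1⟩ | ⟨e1, f1⟩ | ⟨e1, f1⟩ <;>
              rcases hSval (idx p2.2) (by have := hidx_lt _ h2; omega) with
                  ⟨e2, f2⟩ | ⟨e2, f2⟩ | ⟨e2, f2⟩ | ⟨e2, f2⟩ <;> omega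
        rcases hform x hx with ⟨bx, rfl, hqx⟩ | ⟨px, rfl, hmx, hsx⟩ <;>
          rcases hform y hy with ⟨by', rfl, hqy⟩ | ⟨py, rfl, hmy, hsy⟩ <;>
            rcases hform z hz with ⟨bz, rfl, hqz⟩ | ⟨pz, rfl, hmz, hsz⟩
        · exact Or.inl (hinlext _ _)
        · exact Or.inl (hinlext _ _)
        · exact Or.inr (Or.inl (hinlext _ _))
        · exact Or.inr (Or.inr (hii py pz hmy hmz hsy hsz hqx))
        · exact Or.inr (Or.inr (hinlext _ _))
        · exact Or.inr (Or.inl (hii px pz hmx hmz hsx hsz hqy))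
        · exact Or.inl (hii px py hmx hmy hsx hsy hqz)
        · -- all three inr
          by_cases he12 : idx px.2 = idx py.2
          · exact Or.inl (hprodext _ _ (hidx_inj _ hmx _ hmy he12))
          · by_cases he13 : idx px.2 = idx pz.2
            · exact Or.inr (Or.inl (hprodext _ _ (hidx_inj _ hmx _ hmz he13)))
            · by_cases he23 : idx py.2 = idx pz.2
              · exact Or.inr (Or.inr (hprodext _ _ (hidx_inj _ hmy _ hmz he23)))
              · exfalso
                rcases hSval (idx px.2) (by have := hidx_lt _ hmx; omega) with
                    ⟨e1, f1⟩ | ⟨e1, f1⟩ | ⟨e1, f1⟩ | ⟨e1, f1⟩ <;>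
                  rcases hSval (idx py.2) (by have := hidx_lt _ hmy; omega) with
                      ⟨e2, f2⟩ | ⟨e2, f2⟩ | ⟨e2, f2⟩ | ⟨e2, f2⟩ <;>
                    rcases hSval (idx pz.2) (by have := hidx_lt _ hmz; omega) with
                        ⟨e3, f3⟩ | ⟨e3, f3⟩ | ⟨e3, f3⟩ | ⟨e3, f3⟩ <;> omega
      · -- a leg vertex
        have hTwoInr : ∀ p1 p2 : Fin 1 × W,
            G'.Adj (Sum.inr p) (Sum.inr p1) → col s(Sum.inr p, Sum.inr p1) = q →
            G'.Adj (Sum.inr p) (Sum.inr p2) → col s(Sum.inr p, Sum.inr p2) = q →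
            (Sum.inr p1 : Fin 1 ⊕ Fin 1 × W) = Sum.inr p2 := by
          intro p1 p2 ha1 hc1 ha2 hc2
          have hadj1 : H.Adj p.2 p1.2 := (hadj_rr p p1).1 ha1
          have hadj2 : H.Adj p.2 p2.2 := (hadj_rr p p2).1 ha2
          have hcls : ∀ p' : Fin 1 × W, H.Adj p.2 p'.2 → col s(Sum.inr p, Sum.inr p') = q →
              (H.dist c p'.2 + 1 = H.dist c p.2 ∧ p'.2 = parent p.2 ∧ q = colE p.2) ∨
              (H.dist c p'.2 = H.dist c p.2 + 1 ∧ q = colE p.2 + D (idx (leg p.2))) := by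
            intro p' hadj' hcol'
            rcases auxStep htree c hadj' with hst | hst
            · right
              refine ⟨hst, ?_⟩
              rw [← hcol', hcol_rr p p' (by omega)]
              exact ((hchildcol p.2 p'.2 hpc hadj' hst).2)
            · left
              refine ⟨by omega, hParentU p.2 hpc p'.2 hadj' (by omega), ?_⟩
              rw [← hcol', hcol_rr' p p' (by omega)]
          rcases hcls p1 hadj1 hc1 with ⟨hd1, hp1, hq1⟩ | ⟨hd1, hq1⟩ <;>
            rcases hcls p2 hadj2 hc2 with ⟨hd2, hp2, hq2⟩ | ⟨hd2, hq2⟩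
          · exact hprodext _ _ (by rw [hp1, hp2])
          · exfalso
            rcases hD1 (idx (leg p.2)) with h | h <;> omega
          · exfalso
            rcases hD1 (idx (leg p.2)) with h | h <;> omega
          · exact hprodext _ _ (hChildU p.2 hpc p1.2 p2.2 hadj1 hadj2 hd1 hd2)
        rcases x with bx | px <;> rcases y with by' | py <;> rcases z with bz | pz
        · exact Or.inl (hinlext _ _)
        · exact Or.inl (hinlext _ _)
        · exact Or.inr (Or.inl (hinlext _ _))
        · exact Or.inr (Or.inr (hTwoInr py pz hy.1 hy.2 hz.1 hz.2))
        · exact Or.inr (Or.inr (hinlext _ _))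
        · exact Or.inr (Or.inl (hTwoInr px pz hx.1 hx.2 hz.1 hz.2))
        · exact Or.inl (hTwoInr px py hx.1 hx.2 hy.1 hy.2)
        · exact Or.inl (hTwoInr px py hx.1 hx.2 hy.1 hy.2)
  -- the coloring is an interval coloring
  have hInt : IsIntervalColoring G' col := by
    intro v a b x ha hb hax hxb
    rcases v with aa | p
    · -- the universal vertex
      have hform : ∀ y : ℤ, (∃ u, G'.Adj (Sum.inl aa) u ∧ col s(Sum.inl aa, u) = y) →
          ∃ wv : W, fw wv = y := by
        rintro y ⟨u, hu1, hu2⟩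
        rcases u with b' | pu
        · exact absurd hu1 (hadj_ll _ _)
        · exact ⟨pu.2, by rw [← hu2, hcol_ul]⟩
      have hwit : ∀ wv : W, fw wv = x →
          ∃ u, G'.Adj (Sum.inl aa) u ∧ col s(Sum.inl aa, u) = x := by
        intro wv hwv
        exact ⟨Sum.inr (aa, wv), hadj_lr _ _, by rw [hcol_ul]; exact hwv⟩
      have hnbfw : ∀ i : ℕ, i < k → idx (leg (nb i)) = i ∧ H.dist c (nb i) = 1 := by
        intro i hi
        have hmem := (hnb_mem i hi).1
        constructor
        · rw [hlegSelf _ (hNc_dist _ hmem)]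
          exact (hnb_mem i hi).2
        · exact hNc_dist _ hmem
      by_cases hx0 : x = 0
      · exact hwit c (by rw [hfwc, hx0])
      by_cases hx1 : x = 1
      · have h1k : (1:ℕ) < k := by omega
        obtain ⟨hidx1, hd1⟩ := hnbfw 1 h1k
        apply hwit (nb 1)
        rcases hfwI (nb 1) (hnbne 1 h1k) with ⟨e1, f1⟩ | ⟨e1, f1⟩ | ⟨e1, f1⟩ | ⟨e1, f1⟩ <;>
          omega
      by_cases hx2 : x = 2
      · have h0k : (0:ℕ) < k := by omega
        obtain ⟨hidx0, hd0⟩ := hnbfw 0 h0k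
        apply hwit (nb 0)
        rcases hfwI (nb 0) (hnbne 0 h0k) with ⟨e1, f1⟩ | ⟨e1, f1⟩ | ⟨e1, f1⟩ | ⟨e1, f1⟩ <;>
          omega
      by_cases hx3 : 3 ≤ x
      · obtain ⟨wb, hwb⟩ := hform b hb
        have hwbc : wb ≠ c := by
          intro h; rw [h, hfwc] at hwb; omega
        have hd := hdpos wb hwbc
        rcases hfwI wb hwbc with ⟨e1, f1⟩ | ⟨e1, f1⟩ | ⟨e1, f1⟩ | ⟨e1, f1⟩
        · obtain ⟨w', hw'c, hw'leg, hw'd⟩ := hAnc wb hwbc (x - 1).toNat (by omega) (by omega)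
          apply hwit w'
          have hidx' : idx (leg w') = 0 := by rw [hw'leg]; exact e1
          have hcast : (↑((x - 1).toNat) : ℤ) = x - 1 := Int.toNat_of_nonneg (by omega)
          rcases hfwI w' hw'c with ⟨e2, f2⟩ | ⟨e2, f2⟩ | ⟨e2, f2⟩ | ⟨e2, f2⟩ <;> omega
        · obtain ⟨w', hw'c, hw'leg, hw'd⟩ := hAnc wb hwbc x.toNat (by omega) (by omega)
          apply hwit w'
          have hidx' : idx (leg w') = 1 := by rw [hw'leg]; exact e1
          have hcast : (↑(x.toNat) : ℤ) = x := Int.toNat_of_nonneg (by omega)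
          rcases hfwI w' hw'c with ⟨e2, f2⟩ | ⟨e2, f2⟩ | ⟨e2, f2⟩ | ⟨e2, f2⟩ <;> omega
        · omega
        · omega
      · have hxneg : x ≤ -1 := by omega
        obtain ⟨wa, hwa⟩ := hform a ha
        have hwac : wa ≠ c := by
          intro h; rw [h, hfwc] at hwa; omega
        have hd := hdpos wa hwac
        rcases hfwI wa hwac with ⟨e1, f1⟩ | ⟨e1, f1⟩ | ⟨e1, f1⟩ | ⟨e1, f1⟩
        · omega
        · omega
        · obtain ⟨w', hw'c, hw'leg, hw'd⟩ := hAnc wa hwac (1 - x).toNat (by omega) (by omega)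
          apply hwit w'
          have hidx' : idx (leg w') = 2 := by rw [hw'leg]; exact e1
          have hcast : (↑((1 - x).toNat) : ℤ) = 1 - x := Int.toNat_of_nonneg (by omega)
          rcases hfwI w' hw'c with ⟨e2, f2⟩ | ⟨e2, f2⟩ | ⟨e2, f2⟩ | ⟨e2, f2⟩ <;> omega
        · obtain ⟨w', hw'c, hw'leg, hw'd⟩ := hAnc wa hwac (-x).toNat (by omega) (by omega)
          apply hwit w'
          have hidx' : idx (leg w') = 3 := by rw [hw'leg]; exact e1
          have hcast : (↑((-x).toNat) : ℤ) = -x := Int.toNat_of_nonneg (by omega)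
          rcases hfwI w' hw'c with ⟨e2, f2⟩ | ⟨e2, f2⟩ | ⟨e2, f2⟩ | ⟨e2, f2⟩ <;> omega
    · by_cases hpc : p.2 = c
      · -- the center vertex
        have hbound : ∀ y : ℤ, (∃ u, G'.Adj (Sum.inr p) u ∧ col s(Sum.inr p, u) = y) →
            0 ≤ y ∧ y ≤ 2 := by
          rintro y ⟨u, hu1, hu2⟩
          rcases u with b' | pu
          · rw [hcol_lu, hpc, hfwc] at hu2
            omega
          · have hadj : H.Adj c pu.2 := by rw [← hpc]; exact (hadj_rr p pu).1 hu1
            have hmem := (hNcmem pu.2).2 hadj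
            have hdd : H.dist c p.2 < H.dist c pu.2 := by
              have h1 := hNc_dist pu.2 hmem
              rw [hpc, SimpleGraph.dist_self]
              omega
            rw [hcol_rr p pu hdd, hcolE1 pu.2 hmem] at hu2
            rcases hSval (idx pu.2) (by have := hidx_lt _ hmem; omega) with
              ⟨e1, f1⟩ | ⟨e1, f1⟩ | ⟨e1, f1⟩ | ⟨e1, f1⟩ <;> omega
        have ha2 := hbound a ha
        have hb2 := hbound b hb
        by_cases hxa : x = a
        · obtain ⟨u, h1, h2⟩ := ha
          exact ⟨u, h1, by rw [h2, hxa]⟩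
        by_cases hxb' : x = b
        · obtain ⟨u, h1, h2⟩ := hb
          exact ⟨u, h1, by rw [h2, hxb']⟩
        · have hx1 : x = 1 := by omega
          have h1k : (1:ℕ) < k := by omega
          have hmem := (hnb_mem 1 h1k).1
          refine ⟨Sum.inr (p.1, nb 1), ?_, ?_⟩
          · apply (hadj_rr p (p.1, nb 1)).2
            show H.Adj p.2 (nb 1)
            rw [hpc]
            exact (hNcmem _).1 hmem
          · have hdd : H.dist c p.2 < H.dist c (p.1, nb 1).2 := by
              have h1 := hNc_dist (nb 1) hmem
              rw [hpc, SimpleGraph.dist_self]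
              show 0 < H.dist c (nb 1)
              omega
            rw [hcol_rr p (p.1, nb 1) hdd]
            show colE (nb 1) = x
            rw [hcolE1 _ hmem, (hnb_mem 1 h1k).2, hx1, hSdef]
            norm_num
      · -- a leg vertex
        have hach : ∀ y : ℤ, ∀ u, G'.Adj (Sum.inr p) u → col s(Sum.inr p, u) = y →
            y = colE p.2 ∨ y = colE p.2 + D (idx (leg p.2)) := by
          intro y u hu1 hu2
          rcases u with b' | pu
          · rw [hcol_lu] at hu2
            have hE : E (idx (leg p.2)) = 0 ∨ E (idx (leg p.2)) = 1 := by
              rw [hEdef]; by_cases h : idx (leg p.2) ≤ 1 <;> simp [h]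
            have hfc : fw p.2 = colE p.2 + D (idx (leg p.2)) * E (idx (leg p.2)) := by
              rw [hfwdef, hcolEdef]
              simp only [if_neg hpc]
              ring
            rcases hE with h | h
            · left; rw [← hu2, hfc, h]; ring
            · right; rw [← hu2, hfc, h]; ring
          · have hadj' : H.Adj p.2 pu.2 := (hadj_rr p pu).1 hu1
            rcases auxStep htree c hadj' with hst | hst
            · right
              rw [← hu2, hcol_rr p pu (by omega)]
              exact (hchildcol p.2 pu.2 hpc hadj' hst).2
            · left
              rw [← hu2, hcol_rr' p pu (by omega)]
        obtain ⟨ua, ha1, ha2⟩ := ha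
        obtain ⟨ub, hb1, hb2⟩ := hb
        have hya := hach a ua ha1 ha2
        have hyb := hach b ub hb1 hb2
        have hxab : x = a ∨ x = b := by
          rcases hD1 (idx (leg p.2)) with h | h <;> omega
        rcases hxab with h | h
        · exact ⟨ua, ha1, by rw [ha2, h]⟩
        · exact ⟨ub, hb1, by rw [hb2, h]⟩
  unfold impropriety
  exact Nat.sInf_le ⟨col, hInt, hImp⟩
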